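/- Let c ≥ 2, ñ ≥ 3, n = cñ, and for c₀ ∈ {1,…,c−1} let V_{c₀} = B₁ ∪ … ∪ B_{c₀} be the set of vertices of the first c₀ blocks of the c-barbell graph. Then the subset conductances of the uniform and effective-resistance gossiping matrices satisfy Φ_{V_{c₀}}(W̄_{P^u}) = 1/(c₀ · c · ñ³) and Φ_{V_{c₀}}(W̄_{P^r}) = 1/(2·c₀·ñ·(cñ − 1)), where Φ_S(W) = (1/|S|)·Σ_{i∈S, j∉S} W_{ij}. -/

import Mathlib

open Matrix BigOperators Finset

/-- The `c`-barbell graph on `c*tn` vertices (0-indexed): for each `k = 0,…,c−1` the block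
`B_k = {k*tn,…,(k+1)*tn−1}` induces a complete graph (two vertices are in the same block iff
their values have the same quotient by `tn`), and for each `k = 1,…,c−1` there is a bridge edge
between vertex `k*tn − 1` and vertex `k*tn` (i.e. between consecutive vertices `i, i+1` with
`(i+1) % tn = 0`). -/
def cBarbell (c tn : ℕ) : SimpleGraph (Fin (c * tn)) where
  Adj i j := i ≠ j ∧ (i.val / tn = j.val / tn ∨
    (j.val = i.val + 1 ∧ (i.val + 1) % tn = 0) ∨
    (i.val = j.val + 1 ∧ (j.val + 1) % tn = 0))
  symm := by
    constructor
    rintro i j ⟨hne, h⟩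
    refine ⟨hne.symm, ?_⟩
    rcases h with h | h | h
    · exact Or.inl h.symm
    · exact Or.inr (Or.inr h)
    · exact Or.inr (Or.inl h)
  loopless := by constructor; rintro i ⟨hne, -⟩; exact hne rfl

instance (c tn : ℕ) : DecidableRel (cBarbell c tn).Adj := fun i j =>
  inferInstanceAs (Decidable (i ≠ j ∧ (i.val / tn = j.val / tn ∨
    (j.val = i.val + 1 ∧ (i.val + 1) % tn = 0) ∨
    (i.val = j.val + 1 ∧ (j.val + 1) % tn = 0))))

/-- The uniform edge-activation probability matrix: `P^u_{ij} = 1/(n d_i)` on edges, `0` else. -/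
noncomputable def probUnif {n : ℕ} (G : SimpleGraph (Fin n)) [DecidableRel G.Adj] :
    Matrix (Fin n) (Fin n) ℝ :=
  Matrix.of fun i j => if G.Adj i j then 1 / ((n : ℝ) * (G.degree i : ℝ)) else 0

/-- The uniform-gossiping matrix `W̄_{P^u} = I − D^u/2 + (P^u + (P^u)ᵀ)/2`, where
`D^u_{ii} = Σ_j (P^u_{ij} + P^u_{ji})`. -/
noncomputable def gossipUnif {n : ℕ} (G : SimpleGraph (Fin n)) [DecidableRel G.Adj] :
    Matrix (Fin n) (Fin n) ℝ :=
  (1 : Matrix (Fin n) (Fin n) ℝ)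
    - (1 / 2 : ℝ) • Matrix.diagonal (fun i => ∑ j, (probUnif G i j + probUnif G j i))
    + (1 / 2 : ℝ) • (probUnif G + (probUnif G)ᵀ)

/-- The effective-resistance edge-activation probabilities on the `c`-barbell graph with
`n = c*tn`: `1/(2(n−1))` on bridge edges, `1/(tn(n−1))` on edges within a block, `0` else. -/
noncomputable def probResCBarbell (c tn : ℕ) : Matrix (Fin (c * tn)) (Fin (c * tn)) ℝ :=
  Matrix.of fun i j =>
    if (cBarbell c tn).Adj i j then
      (if i.val / tn = j.val / tn then 1 / ((tn : ℝ) * ((c : ℝ) * (tn : ℝ) - 1))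
       else 1 / (2 * ((c : ℝ) * (tn : ℝ) - 1)))
    else 0

/-- The effective-resistance gossiping matrix `W̄_{P^r} = I − D^r/2 + P^r` of the `c`-barbell
graph, where `D^r_{ii} = 2 Σ_j P^r_{ij}`. -/
noncomputable def gossipResCBarbell (c tn : ℕ) : Matrix (Fin (c * tn)) (Fin (c * tn)) ℝ :=
  (1 : Matrix (Fin (c * tn)) (Fin (c * tn)) ℝ)
    - (1 / 2 : ℝ) • Matrix.diagonal (fun i => 2 * ∑ j, probResCBarbell c tn i j)
    + probResCBarbell c tn

/-- The subset conductance `Φ_S(W) = (1/|S|) Σ_{i∈S, j∉S} W_{ij}`. -/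
noncomputable def subsetConductance {n : ℕ} (W : Matrix (Fin n) (Fin n) ℝ)
    (S : Finset (Fin n)) : ℝ :=
  (∑ i ∈ S, ∑ j ∈ Sᶜ, W i j) / (S.card : ℝ)

/-! ## Auxiliary lemmas -/

lemma cBarbell_adj (c tn : ℕ) (i j : Fin (c * tn)) :
    (cBarbell c tn).Adj i j ↔ (i ≠ j ∧ (i.val / tn = j.val / tn ∨
      (j.val = i.val + 1 ∧ (i.val + 1) % tn = 0) ∨
      (i.val = j.val + 1 ∧ (j.val + 1) % tn = 0))) := Iff.rfl

lemma divEq (tn k j : ℕ) (htn : 0 < tn) : j / tn = k ↔ k * tn ≤ j ∧ j < k * tn + tn := by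
  constructor
  · rintro rfl
    refine ⟨Nat.div_mul_le_self _ _, ?_⟩
    have h1 := Nat.div_add_mod j tn
    have h2 := Nat.mod_lt j htn
    nlinarith
  · rintro ⟨h1, h2⟩
    have hq1 : j / tn < k + 1 := Nat.div_lt_iff_lt_mul htn |>.mpr (by rw [Nat.succ_mul]; omega)
    have hq2 : k ≤ j / tn := Nat.le_div_iff_mul_le htn |>.mpr h1
    omega

lemma blockCard (c tn k : ℕ) (htn : 0 < tn) (hk : k < c) :
    (Finset.univ.filter (fun j : Fin (c * tn) => j.val / tn = k)).card = tn := by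
  have : (Finset.univ.filter (fun j : Fin (c * tn) => j.val / tn = k)) =
      Finset.map ⟨fun m : Fin tn => (⟨k * tn + m.val, by have := m.isLt; nlinarith⟩ : Fin (c * tn)),
        by intro a b h; simpa [Fin.ext_iff] using h⟩ Finset.univ := by
    ext j
    simp only [Finset.mem_filter, Finset.mem_univ, true_and, Finset.mem_map,
      Function.Embedding.coeFn_mk, divEq tn k _ htn]
    constructor
    · rintro ⟨h1, h2⟩
      exact ⟨⟨j.val - k * tn, by omega⟩, Fin.ext (by show k * tn + (j.val - k * tn) = j.val; omega)⟩
    · rintro ⟨m, rfl⟩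
      show k * tn ≤ k * tn + m.val ∧ k * tn + m.val < k * tn + tn
      have := m.isLt; omega
  rw [this, Finset.card_map, Finset.card_univ, Fintype.card_fin]

lemma cardLt (c tn a : ℕ) (ha : a ≤ c * tn) :
    (Finset.univ.filter (fun j : Fin (c * tn) => j.val < a)).card = a := by
  have : (Finset.univ.filter (fun j : Fin (c * tn) => j.val < a)) =
      Finset.map ⟨fun m : Fin a => (⟨m.val, lt_of_lt_of_le m.isLt ha⟩ : Fin (c * tn)),
        by intro x y h; simpa [Fin.ext_iff] using h⟩ Finset.univ := by
    ext j
    simp only [Finset.mem_filter, Finset.mem_univ, true_and, Finset.mem_map,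
      Function.Embedding.coeFn_mk]
    constructor
    · intro h; exact ⟨⟨j.val, h⟩, by simp [Fin.ext_iff]; rfl⟩
    · rintro ⟨m, rfl⟩; exact m.isLt
  rw [this, Finset.card_map, Finset.card_univ, Fintype.card_fin]

lemma sum_single_pair {n : ℕ} (V : Finset (Fin n)) (W : Matrix (Fin n) (Fin n) ℝ)
    (i₀ j₀ : Fin n) (hi : i₀ ∈ V) (hj : j₀ ∈ Vᶜ) (v : ℝ)
    (h : ∀ i ∈ V, ∀ j ∈ Vᶜ, W i j = if i = i₀ ∧ j = j₀ then v else 0) :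
    ∑ i ∈ V, ∑ j ∈ Vᶜ, W i j = v := by
  rw [Finset.sum_congr rfl (fun i hi' => Finset.sum_congr rfl (fun j hj' => h i hi' j hj'))]
  have key : ∀ i, ∑ j ∈ Vᶜ, (if i = i₀ ∧ j = j₀ then v else 0) = if i = i₀ then v else 0 := by
    intro i
    by_cases h' : i = i₀
    · simp [h', Finset.sum_ite_eq', hj]
    · simp [h']
  rw [Finset.sum_congr rfl fun i _ => key i]
  simp [Finset.sum_ite_eq', hi]

lemma degree_bridge (c tn c0 : ℕ) (hc : 2 ≤ c) (htn : 3 ≤ tn) (hc0 : 1 ≤ c0) (hc0' : c0 ≤ c - 1)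
    (h1 : c0 * tn - 1 < c * tn) (h2 : c0 * tn < c * tn) :
    (cBarbell c tn).degree ⟨c0 * tn - 1, h1⟩ = tn ∧
    (cBarbell c tn).degree ⟨c0 * tn, h2⟩ = tn := by
  have htn0 : 0 < tn := by omega
  have ha1 : 0 < c0 * tn := Nat.mul_pos (by omega) htn0
  have hsub : c0 * tn - 1 = (c0 - 1) * tn + (tn - 1) := by
    obtain ⟨c0', rfl⟩ : ∃ c0', c0 = c0' + 1 := ⟨c0 - 1, by omega⟩
    simp only [Nat.add_sub_cancel, Nat.succ_mul]; omega
  have hdiv_i : (c0 * tn - 1) / tn = c0 - 1 := by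
    rw [divEq _ _ _ htn0, hsub]; omega
  have hmod_i : (c0 * tn - 1) % tn = tn - 1 := by
    rw [hsub, Nat.add_comm, Nat.add_mul_mod_self_right, Nat.mod_eq_of_lt (by omega)]
  have hdiv_j : (c0 * tn) / tn = c0 := by rw [divEq _ _ _ htn0]; omega
  have hmod_j : (c0 * tn) % tn = 0 := Nat.mul_mod_left _ _
  have hmod_j1 : (c0 * tn + 1) % tn = 1 := by
    rw [Nat.add_comm, Nat.add_mul_mod_self_right, Nat.mod_eq_of_lt (by omega)]
  constructor
  · rw [SimpleGraph.degree, SimpleGraph.neighborFinset_eq_filter]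
    have hset : Finset.univ.filter ((cBarbell c tn).Adj ⟨c0 * tn - 1, h1⟩) =
        insert (⟨c0 * tn, h2⟩ : Fin (c * tn))
          ((Finset.univ.filter (fun j : Fin (c * tn) => j.val / tn = c0 - 1)).erase
            ⟨c0 * tn - 1, h1⟩) := by
      ext j
      simp only [Finset.mem_filter, Finset.mem_univ, true_and, Finset.mem_insert,
        Finset.mem_erase, cBarbell_adj, ne_eq, Fin.ext_iff, Fin.val_mk]
      constructor
      · rintro ⟨hne, h | ⟨hb1, hb2⟩ | ⟨hb1, hb2⟩⟩
        · exact Or.inr ⟨fun h' => hne h'.symm, by omega⟩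
        · exact Or.inl (by omega)
        · exfalso; rw [show j.val + 1 = c0 * tn - 1 by omega, hmod_i] at hb2; omega
      · rintro (h | ⟨hne, h⟩)
        · refine ⟨by omega, Or.inr (Or.inl ⟨by omega, ?_⟩)⟩
          rw [show c0 * tn - 1 + 1 = c0 * tn by omega, hmod_j]
        · exact ⟨fun h' => hne h'.symm, Or.inl (by omega)⟩
    rw [hset, Finset.card_insert_of_notMem (by
        simp only [Finset.mem_erase, Finset.mem_filter, Finset.mem_univ, true_and, Fin.val_mk,
          hdiv_j]
        omega),
      Finset.card_erase_of_mem (by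
        simp only [Finset.mem_filter, Finset.mem_univ, true_and, Fin.val_mk, hdiv_i]),
      blockCard c tn (c0 - 1) htn0 (by omega)]
    omega
  · rw [SimpleGraph.degree, SimpleGraph.neighborFinset_eq_filter]
    have hset : Finset.univ.filter ((cBarbell c tn).Adj ⟨c0 * tn, h2⟩) =
        insert (⟨c0 * tn - 1, h1⟩ : Fin (c * tn))
          ((Finset.univ.filter (fun j : Fin (c * tn) => j.val / tn = c0)).erase
            ⟨c0 * tn, h2⟩) := by
      ext j
      simp only [Finset.mem_filter, Finset.mem_univ, true_and, Finset.mem_insert,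
        Finset.mem_erase, cBarbell_adj, ne_eq, Fin.ext_iff, Fin.val_mk]
      constructor
      · rintro ⟨hne, h | ⟨hb1, hb2⟩ | ⟨hb1, hb2⟩⟩
        · exact Or.inr ⟨fun h' => hne h'.symm, by omega⟩
        · exfalso; rw [show c0 * tn + 1 = c0 * tn + 1 from rfl] at hb2; omega
        · exact Or.inl (by omega)
      · rintro (h | ⟨hne, h⟩)
        · refine ⟨by omega, Or.inr (Or.inr ⟨by omega, ?_⟩)⟩
          rw [show j.val + 1 = c0 * tn by omega, hmod_j]
        · exact ⟨fun h' => hne h'.symm, Or.inl (by omega)⟩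
    rw [hset, Finset.card_insert_of_notMem (by
        simp only [Finset.mem_erase, Finset.mem_filter, Finset.mem_univ, true_and, Fin.val_mk,
          hdiv_i]
        omega),
      Finset.card_erase_of_mem (by
        simp only [Finset.mem_filter, Finset.mem_univ, true_and, Fin.val_mk, hdiv_j]),
      blockCard c tn c0 htn0 (by omega)]
    omega

/-- The subset conductances of the first `c₀` blocks `V_{c₀} = B₁ ∪ … ∪ B_{c₀}` of the
`c`-barbell graph: `Φ_{V_{c₀}}(W̄_{P^u}) = 1/(c₀ c tn³)` and
`Φ_{V_{c₀}}(W̄_{P^r}) = 1/(2 c₀ tn (c tn − 1))`. -/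
theorem stmt11 (c tn : ℕ) (hc : 2 ≤ c) (htn : 3 ≤ tn)
    (c0 : ℕ) (hc0 : 1 ≤ c0) (hc0' : c0 ≤ c - 1)
    (V : Finset (Fin (c * tn))) (hV : V = Finset.univ.filter (fun i => i.val < c0 * tn)) :
    subsetConductance (gossipUnif (cBarbell c tn)) V =
      1 / ((c0 : ℝ) * (c : ℝ) * (tn : ℝ) ^ 3) ∧
    subsetConductance (gossipResCBarbell c tn) V =
      1 / (2 * (c0 : ℝ) * (tn : ℝ) * ((c : ℝ) * (tn : ℝ) - 1)) := by
  have htn0 : 0 < tn := by omega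
  have ha1 : 0 < c0 * tn := Nat.mul_pos (by omega) htn0
  have hacn : c0 * tn < c * tn := (Nat.mul_lt_mul_right htn0).mpr (by omega)
  have h1 : c0 * tn - 1 < c * tn := by omega
  set i₀ : Fin (c * tn) := ⟨c0 * tn - 1, h1⟩ with hi₀
  set j₀ : Fin (c * tn) := ⟨c0 * tn, hacn⟩ with hj₀
  have hsub : c0 * tn - 1 = (c0 - 1) * tn + (tn - 1) := by
    obtain ⟨c0', rfl⟩ : ∃ c0', c0 = c0' + 1 := ⟨c0 - 1, by omega⟩
    simp only [Nat.add_sub_cancel, Nat.succ_mul]; omega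
  have hdiv_i : (c0 * tn - 1) / tn = c0 - 1 := by
    rw [divEq _ _ _ htn0, hsub]; omega
  have hdiv_j : (c0 * tn) / tn = c0 := by rw [divEq _ _ _ htn0]; omega
  have hmod_j : (c0 * tn) % tn = 0 := Nat.mul_mod_left _ _
  -- membership
  have hVmem : ∀ i : Fin (c * tn), i ∈ V ↔ i.val < c0 * tn := by
    intro i; rw [hV]; simp
  have hVcmem : ∀ i : Fin (c * tn), i ∈ Vᶜ ↔ c0 * tn ≤ i.val := by
    intro i; rw [Finset.mem_compl, hVmem]; omega
  have hi₀V : i₀ ∈ V := (hVmem i₀).mpr (by simp [hi₀]; omega)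
  have hj₀V : j₀ ∈ Vᶜ := (hVcmem j₀).mpr (by simp [hj₀])
  have hVcard : (V.card : ℝ) = (c0 : ℝ) * (tn : ℝ) := by
    rw [hV, cardLt c tn _ (le_of_lt hacn)]; push_cast; ring
  -- adjacency across the cut
  have hAdj : ∀ i j : Fin (c * tn), i.val < c0 * tn → c0 * tn ≤ j.val →
      ((cBarbell c tn).Adj i j ↔ (i = i₀ ∧ j = j₀)) := by
    intro i j hi hj
    rw [cBarbell_adj]
    constructor
    · rintro ⟨hne, h | ⟨hb1, hb2⟩ | ⟨hb1, hb2⟩⟩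
      · exfalso
        have h3 : i.val / tn < c0 := (Nat.div_lt_iff_lt_mul htn0).mpr hi
        have h4 : c0 ≤ j.val / tn := (Nat.le_div_iff_mul_le htn0).mpr hj
        omega
      · exact ⟨Fin.ext (by simp [hi₀]; omega), Fin.ext (by simp [hj₀]; omega)⟩
      · exfalso; omega
    · rintro ⟨rfl, rfl⟩
      refine ⟨by simp [hi₀, hj₀, Fin.ext_iff]; omega, Or.inr (Or.inl ⟨by simp [hi₀, hj₀]; omega, ?_⟩)⟩
      simp only [hi₀, Fin.val_mk]
      rw [show c0 * tn - 1 + 1 = c0 * tn by omega, hmod_j]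
  have hAdj₀ : (cBarbell c tn).Adj i₀ j₀ := (hAdj i₀ j₀ (by simp [hi₀]; omega) (by simp [hj₀])).mpr ⟨rfl, rfl⟩
  obtain ⟨hdeg_i, hdeg_j⟩ := degree_bridge c tn c0 hc htn hc0 hc0' h1 hacn
  have hcn1 : (1 : ℝ) ≤ (c : ℝ) * (tn : ℝ) - 1 := by
    have : (6 : ℝ) ≤ (c : ℝ) * (tn : ℝ) := by
      have : (6 : ℕ) ≤ c * tn := by nlinarith
      exact_mod_cast this
    linarith
  have hc0R : (0 : ℝ) < (c0 : ℝ) := by exact_mod_cast hc0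
  have htnR : (0 : ℝ) < (tn : ℝ) := by exact_mod_cast htn0
  have hcR : (0 : ℝ) < (c : ℝ) := by positivity
  constructor
  · -- uniform
    have hentry : ∀ i ∈ V, ∀ j ∈ Vᶜ, gossipUnif (cBarbell c tn) i j =
        if i = i₀ ∧ j = j₀ then 1 / ((c : ℝ) * (tn : ℝ) * (tn : ℝ)) else 0 := by
      intro i hiV j hjV
      have hi := (hVmem i).mp hiV
      have hj := (hVcmem j).mp hjV
      have hij : i ≠ j := fun h => by rw [h] at hi; omega
      have hexp : gossipUnif (cBarbell c tn) i j =
          (1 / 2) * (probUnif (cBarbell c tn) i j + probUnif (cBarbell c tn) j i) := by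
        simp [gossipUnif, Matrix.sub_apply, Matrix.add_apply, Matrix.one_apply_ne hij,
          Matrix.diagonal_apply_ne _ hij, Matrix.transpose_apply, smul_eq_mul]
        ring
      rw [hexp]
      by_cases hcase : i = i₀ ∧ j = j₀
      · obtain ⟨rfl, rfl⟩ := hcase
        rw [if_pos ⟨rfl, rfl⟩]
        have hAdj₀' : (cBarbell c tn).Adj j₀ i₀ := hAdj₀.symm
        simp only [probUnif, Matrix.of_apply, if_pos hAdj₀, if_pos hAdj₀', hdeg_i, hdeg_j]
        push_cast
        field_simp
        rw [show (cBarbell c tn).degree i₀ = tn from hdeg_i, show (cBarbell c tn).degree j₀ = tn from hdeg_j]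
        rw [mul_add, mul_one_div_cancel htnR.ne', one_add_one_eq_two]
      · rw [if_neg hcase]
        have hnadj : ¬ (cBarbell c tn).Adj i j := fun h => hcase ((hAdj i j hi hj).mp h)
        have hnadj' : ¬ (cBarbell c tn).Adj j i := fun h => hnadj h.symm
        simp [probUnif, hnadj, hnadj']
    rw [subsetConductance, sum_single_pair V _ i₀ j₀ hi₀V hj₀V _ hentry, hVcard]
    field_simp
  · -- effective resistance
    have hentry : ∀ i ∈ V, ∀ j ∈ Vᶜ, gossipResCBarbell c tn i j =
        if i = i₀ ∧ j = j₀ then 1 / (2 * ((c : ℝ) * (tn : ℝ) - 1)) else 0 := by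
      intro i hiV j hjV
      have hi := (hVmem i).mp hiV
      have hj := (hVcmem j).mp hjV
      have hij : i ≠ j := fun h => by rw [h] at hi; omega
      have hexp : gossipResCBarbell c tn i j = probResCBarbell c tn i j := by
        simp [gossipResCBarbell, Matrix.sub_apply, Matrix.add_apply, Matrix.one_apply_ne hij,
          Matrix.diagonal_apply_ne _ hij, smul_eq_mul]
      rw [hexp]
      by_cases hcase : i = i₀ ∧ j = j₀
      · obtain ⟨rfl, rfl⟩ := hcase
        rw [if_pos ⟨rfl, rfl⟩]
        have hblk : ¬ (i₀.val / tn = j₀.val / tn) := by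
          simp only [hi₀, hj₀, Fin.val_mk, hdiv_i, hdiv_j]
          omega
        simp only [probResCBarbell, Matrix.of_apply, if_pos hAdj₀, if_neg hblk]
      · rw [if_neg hcase]
        have hnadj : ¬ (cBarbell c tn).Adj i j := fun h => hcase ((hAdj i j hi hj).mp h)
        simp [probResCBarbell, hnadj]
    rw [subsetConductance, sum_single_pair V _ i₀ j₀ hi₀V hj₀V _ hentry, hVcard]
    have hne : (c : ℝ) * (tn : ℝ) - 1 ≠ 0 := by linarith
    field_simp
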